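/- For α ∈ ℂ* let W(α) = {(x,y,z,w) ∈ ℂ⁴ : x + αz = 0, y − α⁻¹w = 0} and W'(β) = {(x,y,z,w) ∈ ℂ⁴ : x + βw = 0, y − β⁻¹z = 0} for β ∈ ℂ*, which are 2-dimensional subspaces of ℂ⁴. Then for all nonzero α, α', β, β' ∈ ℂ: (a) W(α) ∩ W(α') = {0} if and only if α ≠ α', and likewise W'(β) ∩ W'(β') = {0} iff β ≠ β'; and (b) dim_ℂ (W(α) ∩ W'(β)) = 1 for every α, β. Consequently, the eight lines on X_{A,B,C,D,E} ∩ Q₆ (given by the four roots of At⁴+Dt²+A and the four roots of At⁴+Et²+A, when A ≠ 0, AB−2AC+DE = 0, D² ≠ 4A², E² ≠ 4A²) form two sets of four pairwise skew lines, and each line from one set intersects each of the four lines in the other set. -/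
import Mathlib


/-- For `α ∈ ℂ*`, the subspace `W(α) = {(x,y,z,w) ∈ ℂ⁴ : x + αz = 0, y − α⁻¹w = 0}`. -/
noncomputable def lineW (α : ℂ) : Submodule ℂ (Fin 4 → ℂ) where
  carrier := {p | p 0 + α * p 2 = 0 ∧ p 1 - α⁻¹ * p 3 = 0}
  add_mem' := by
    rintro a b ⟨ha1, ha2⟩ ⟨hb1, hb2⟩
    refine ⟨?_, ?_⟩ <;> simp only [Pi.add_apply]
    · linear_combination ha1 + hb1
    · linear_combination ha2 + hb2
  zero_mem' := by simp
  smul_mem' := by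
    rintro c p ⟨h1, h2⟩
    refine ⟨?_, ?_⟩ <;> simp only [Pi.smul_apply, smul_eq_mul]
    · linear_combination c * h1
    · linear_combination c * h2

/-- For `β ∈ ℂ*`, the subspace `W'(β) = {(x,y,z,w) ∈ ℂ⁴ : x + βw = 0, y − β⁻¹z = 0}`. -/
noncomputable def lineW' (β : ℂ) : Submodule ℂ (Fin 4 → ℂ) where
  carrier := {p | p 0 + β * p 3 = 0 ∧ p 1 - β⁻¹ * p 2 = 0}
  add_mem' := by
    rintro a b ⟨ha1, ha2⟩ ⟨hb1, hb2⟩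
    refine ⟨?_, ?_⟩ <;> simp only [Pi.add_apply]
    · linear_combination ha1 + hb1
    · linear_combination ha2 + hb2
  zero_mem' := by simp
  smul_mem' := by
    rintro c p ⟨h1, h2⟩
    refine ⟨?_, ?_⟩ <;> simp only [Pi.smul_apply, smul_eq_mul]
    · linear_combination c * h1
    · linear_combination c * h2

lemma mem_lineW (α : ℂ) (p : Fin 4 → ℂ) :
    p ∈ lineW α ↔ p 0 + α * p 2 = 0 ∧ p 1 - α⁻¹ * p 3 = 0 := Iff.rfl

lemma mem_lineW' (β : ℂ) (p : Fin 4 → ℂ) :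
    p ∈ lineW' β ↔ p 0 + β * p 3 = 0 ∧ p 1 - β⁻¹ * p 2 = 0 := Iff.rfl

lemma lineW_eq_span (α : ℂ) :
    lineW α = Submodule.span ℂ {![-α,0,1,0], ![0,α⁻¹,0,1]} := by
  apply le_antisymm
  · intro p hp
    rw [mem_lineW] at hp
    rw [Submodule.mem_span_pair]
    refine ⟨p 2, p 3, ?_⟩
    funext i
    fin_cases i <;> simp
    · linear_combination -hp.1
    · linear_combination -hp.2
  · rw [Submodule.span_le]
    rintro q hq
    simp only [Set.mem_insert_iff, Set.mem_singleton_iff] at hq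
    rcases hq with rfl | rfl <;> constructor <;> simp

lemma lineW'_eq_span (β : ℂ) :
    lineW' β = Submodule.span ℂ {![-β,0,0,1], ![0,β⁻¹,1,0]} := by
  apply le_antisymm
  · intro p hp
    rw [mem_lineW'] at hp
    rw [Submodule.mem_span_pair]
    refine ⟨p 3, p 2, ?_⟩
    funext i
    fin_cases i <;> simp
    · linear_combination -hp.1
    · linear_combination -hp.2
  · rw [Submodule.span_le]
    rintro q hq
    simp only [Set.mem_insert_iff, Set.mem_singleton_iff] at hq
    rcases hq with rfl | rfl <;> constructor <;> simp

lemma finrank_span_pair {a b : Fin 4 → ℂ} (h : LinearIndependent ℂ ![a, b]) :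
    Module.finrank ℂ (Submodule.span ℂ {a, b}) = 2 := by
  have : ({a, b} : Set (Fin 4 → ℂ)) = Set.range ![a, b] := by
    ext x
    constructor
    · rintro (rfl | rfl)
      · exact ⟨0, rfl⟩
      · exact ⟨1, rfl⟩
    · rintro ⟨i, rfl⟩
      fin_cases i
      · exact Or.inl rfl
      · exact Or.inr rfl
  rw [this, finrank_span_eq_card h]
  simp

lemma finrank_lineW (α : ℂ) (hα : α ≠ 0) : Module.finrank ℂ (lineW α) = 2 := by
  rw [lineW_eq_span]
  apply finrank_span_pair
  rw [LinearIndependent.pair_iff]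
  intro s t hst
  have h2 := congrFun hst 2
  have h3 := congrFun hst 3
  simp at h2 h3
  exact ⟨h2, h3⟩

lemma finrank_lineW' (β : ℂ) (hβ : β ≠ 0) : Module.finrank ℂ (lineW' β) = 2 := by
  rw [lineW'_eq_span]
  apply finrank_span_pair
  rw [LinearIndependent.pair_iff]
  intro s t hst
  have h2 := congrFun hst 2
  have h3 := congrFun hst 3
  simp at h2 h3
  exact ⟨h3, h2⟩

lemma inf_lineW (α α' : ℂ) (hα : α ≠ 0) (hα' : α' ≠ 0) :
    lineW α ⊓ lineW α' = ⊥ ↔ α ≠ α' := by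
  constructor
  · intro h hne
    subst hne
    rw [inf_idem] at h
    have : (![-α,0,1,0] : Fin 4 → ℂ) ∈ lineW α := by constructor <;> simp
    rw [h, Submodule.mem_bot] at this
    have := congrFun this 2
    simp at this
  · intro hne
    rw [eq_bot_iff]
    rintro p ⟨⟨h1, h2⟩, ⟨h3, h4⟩⟩
    have hp2 : p 2 = 0 := by
      have : (α - α') * p 2 = 0 := by linear_combination h1 - h3
      rcases mul_eq_zero.1 this with h | h
      · exact absurd (sub_eq_zero.1 h) hne
      · exact h
    have hp3 : p 3 = 0 := by
      have : (α⁻¹ - α'⁻¹) * p 3 = 0 := by linear_combination h4 - h2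
      rcases mul_eq_zero.1 this with h | h
      · exfalso
        apply hne
        have := sub_eq_zero.1 h
        field_simp at this
        exact this.symm
      · exact h
    rw [Submodule.mem_bot]
    funext i
    fin_cases i
    · simpa [hp2] using h1
    · simpa [hp3] using h2
    · exact hp2
    · exact hp3

lemma inf_lineW' (β β' : ℂ) (hβ : β ≠ 0) (hβ' : β' ≠ 0) :
    lineW' β ⊓ lineW' β' = ⊥ ↔ β ≠ β' := by
  constructor
  · intro h hne
    subst hne
    rw [inf_idem] at h
    have : (![-β,0,0,1] : Fin 4 → ℂ) ∈ lineW' β := by constructor <;> simp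
    rw [h, Submodule.mem_bot] at this
    have := congrFun this 3
    simp at this
  · intro hne
    rw [eq_bot_iff]
    rintro p ⟨⟨h1, h2⟩, ⟨h3, h4⟩⟩
    have hp3 : p 3 = 0 := by
      have : (β - β') * p 3 = 0 := by linear_combination h1 - h3
      rcases mul_eq_zero.1 this with h | h
      · exact absurd (sub_eq_zero.1 h) hne
      · exact h
    have hp2 : p 2 = 0 := by
      have : (β⁻¹ - β'⁻¹) * p 2 = 0 := by linear_combination h4 - h2
      rcases mul_eq_zero.1 this with h | h
      · exfalso
        apply hne
        have := sub_eq_zero.1 h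
        field_simp at this
        exact this.symm
      · exact h
    rw [Submodule.mem_bot]
    funext i
    fin_cases i
    · simpa [hp3] using h1
    · simpa [hp2] using h2
    · exact hp2
    · exact hp3

lemma inf_lineW_lineW' (α β : ℂ) (hα : α ≠ 0) (hβ : β ≠ 0) :
    lineW α ⊓ lineW' β = Submodule.span ℂ {![-α*β, 1, β, α]} := by
  apply le_antisymm
  · rintro p ⟨⟨h1, h2⟩, ⟨h3, h4⟩⟩
    rw [Submodule.mem_span_singleton]
    refine ⟨p 1, ?_⟩
    have h2' : α * p 1 = p 3 := by
      field_simp at h2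
      linear_combination h2
    have h4' : β * p 1 = p 2 := by
      field_simp at h4
      linear_combination h4
    funext i
    fin_cases i <;> simp
    · linear_combination -h1 - α * h4'
    · linear_combination h4'
    · linear_combination h2'
  · rw [Submodule.span_le, Set.singleton_subset_iff]
    refine ⟨⟨?_, ?_⟩, ⟨?_, ?_⟩⟩ <;>
      simp [inv_mul_cancel₀ hα, inv_mul_cancel₀ hβ] <;> ring

/-- The `W(α)` and `W'(β)` are 2-dimensional subspaces of `ℂ⁴`; two lines of the same
ruling are skew (they meet only in `0`) iff their parameters differ, and any line of one
ruling meets any line of the other ruling in a 1-dimensional subspace. Consequently the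
eight lines on `X_{A,B,C,D,E} ∩ Q₆` form two sets of four pairwise skew lines, and each
line from one set intersects each of the four lines in the other set. -/
theorem lines_skew_and_meet (α α' β β' : ℂ) (hα : α ≠ 0) (hα' : α' ≠ 0)
    (hβ : β ≠ 0) (hβ' : β' ≠ 0) :
    Module.finrank ℂ (lineW α) = 2 ∧ Module.finrank ℂ (lineW' β) = 2 ∧
      (lineW α ⊓ lineW α' = ⊥ ↔ α ≠ α') ∧
      (lineW' β ⊓ lineW' β' = ⊥ ↔ β ≠ β') ∧
      Module.finrank ℂ ↥(lineW α ⊓ lineW' β) = 1 := by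
  refine ⟨finrank_lineW α hα, finrank_lineW' β hβ, inf_lineW α α' hα hα',
    inf_lineW' β β' hβ hβ', ?_⟩
  rw [inf_lineW_lineW' α β hα hβ]
  apply finrank_span_singleton
  intro h
  have := congrFun h 1
  simp at this
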